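/- arXiv:2202.02670 — 5 statements merged into one kernel-verified Lean document; each statement's English description precedes it below -/
import Mathlib

section
/- Let 0 < a < b be real numbers and set c = √(ab) and ρ = (√b − √a)/(√b + √a). Then the Möbius transform φ_c(z) = (z−c)/(z+c) maps the circle {z ∈ ℂ : |z − (a+b)/2| = (b−a)/2} onto the circle {t ∈ ℂ : |t| = ρ}, and it maps the closed disk {z ∈ ℂ : |z − (a+b)/2| ≤ (b−a)/2} into the closed disk {t ∈ ℂ : |t| ≤ ρ}. -/
/-- The Möbius transform `φ_c(z) = (z - c)/(z + c)`. -/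
noncomputable def mobiusPhi (c : ℝ) (z : ℂ) : ℂ := (z - c) / (z + c)

/-- For `0 < a < b`, `c = √(ab)` and `ρ = (√b - √a)/(√b + √a)`, the Möbius transform
`φ_c` maps the circle of radius `(b-a)/2` centered at `(a+b)/2` onto the circle of
radius `ρ` centered at `0`, and maps the corresponding closed disk into the closed
disk of radius `ρ`. -/
theorem mobius_right_circle (a b : ℝ) (ha : 0 < a) (hab : a < b) :
    (mobiusPhi (Real.sqrt (a * b)) '' {z : ℂ | ‖z - (a + b) / 2‖ = (b - a) / 2}
        = {t : ℂ | ‖t‖ = (Real.sqrt b - Real.sqrt a) / (Real.sqrt b + Real.sqrt a)}) ∧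
    Set.MapsTo (mobiusPhi (Real.sqrt (a * b)))
      {z : ℂ | ‖z - (a + b) / 2‖ ≤ (b - a) / 2}
      {t : ℂ | ‖t‖ ≤ (Real.sqrt b - Real.sqrt a) / (Real.sqrt b + Real.sqrt a)} := by
  have hb : 0 < b := ha.trans hab
  set sa := Real.sqrt a with hsa_def
  set sb := Real.sqrt b with hsb_def
  have hsa : 0 < sa := Real.sqrt_pos.2 ha
  have hsb : 0 < sb := Real.sqrt_pos.2 hb
  have hsab : sa < sb := Real.sqrt_lt_sqrt ha.le hab
  have ha2 : sa ^ 2 = a := Real.sq_sqrt ha.le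
  have hb2 : sb ^ 2 = b := Real.sq_sqrt hb.le
  have hc : Real.sqrt (a * b) = sa * sb := Real.sqrt_mul ha.le b
  rw [hc]
  set c := sa * sb with hc_def
  have hcpos : 0 < c := mul_pos hsa hsb
  set ρ := (sb - sa) / (sb + sa) with hρ_def
  have hsum : 0 < sb + sa := by linarith
  have hρ0 : 0 ≤ ρ := div_nonneg (by linarith) hsum.le
  have hρ1 : ρ < 1 := by rw [hρ_def, div_lt_one hsum]; linarith
  have hcenter : ((a : ℂ) + b) / 2 = (((a + b) / 2 : ℝ) : ℂ) := by push_cast; ring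
  have key : ∀ z : ℂ, Complex.normSq (z - (c : ℂ)) - ρ ^ 2 * Complex.normSq (z + c)
      = (1 - ρ ^ 2) * (Complex.normSq (z - ((a : ℂ) + b) / 2) - ((b - a) / 2) ^ 2) := by
    intro z
    rw [hcenter]
    simp only [Complex.normSq_apply, Complex.sub_re, Complex.sub_im, Complex.add_re,
      Complex.add_im, Complex.ofReal_re, Complex.ofReal_im]
    rw [← ha2, ← hb2, hρ_def, hc_def]
    field_simp
    ring
  -- nonvanishing on the closed disk
  have hne : ∀ z : ℂ, ‖z - ((a : ℂ) + b) / 2‖ ≤ (b - a) / 2 → z + (c : ℂ) ≠ 0 := by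
    intro z hz h0
    have hre : |(z - ((a : ℂ) + b) / 2).re| ≤ (b - a) / 2 :=
      (Complex.abs_re_le_norm _).trans hz
    have : (z - ((a : ℂ) + b) / 2).re = z.re - (a + b) / 2 := by
      rw [hcenter]; simp
    rw [this, abs_le] at hre
    have hzre : (z + (c : ℂ)).re = z.re + c := by simp
    have : z.re + c = 0 := by rw [← hzre, h0]; simp
    nlinarith
  have sq_le : ∀ x y : ℝ, 0 ≤ x → 0 ≤ y → (x ≤ y ↔ x ^ 2 ≤ y ^ 2) := by
    intro x y hx hy
    constructor
    · intro h; nlinarith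
    · intro h; nlinarith
  have sq_eq : ∀ x y : ℝ, 0 ≤ x → 0 ≤ y → (x = y ↔ x ^ 2 = y ^ 2) := by
    intro x y hx hy
    constructor
    · intro h; rw [h]
    · intro h; nlinarith
  have hpos : 0 < 1 - ρ ^ 2 := by nlinarith
  have equiv_eq : ∀ z : ℂ, ‖z - ((a : ℂ) + b) / 2‖ = (b - a) / 2 ↔
      ‖z - (c : ℂ)‖ = ρ * ‖z + c‖ := by
    intro z
    have h1 := key z
    rw [sq_eq _ _ (norm_nonneg _) (by linarith),
        sq_eq _ _ (norm_nonneg _) (mul_nonneg hρ0 (norm_nonneg _))]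
    rw [mul_pow, Complex.sq_norm, Complex.sq_norm, Complex.sq_norm]
    constructor
    · intro h
      rw [h, sub_self, mul_zero] at h1
      linarith [h1]
    · intro h
      rw [h, sub_self] at h1
      have h2 := (mul_eq_zero.1 h1.symm).resolve_left (by linarith)
      linarith [h2]
  have equiv_le : ∀ z : ℂ, ‖z - ((a : ℂ) + b) / 2‖ ≤ (b - a) / 2 ↔
      ‖z - (c : ℂ)‖ ≤ ρ * ‖z + c‖ := by
    intro z
    have h1 := key z
    rw [sq_le _ _ (norm_nonneg _) (by linarith),
        sq_le _ _ (norm_nonneg _) (mul_nonneg hρ0 (norm_nonneg _))]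
    rw [mul_pow, Complex.sq_norm, Complex.sq_norm, Complex.sq_norm]
    constructor
    · intro h
      have h2 : (1 - ρ ^ 2) * (Complex.normSq (z - ((a : ℂ) + b) / 2) - ((b - a) / 2) ^ 2) ≤ 0 :=
        mul_nonpos_iff.2 (Or.inl ⟨hpos.le, by linarith⟩)
      linarith [h1, h2]
    · intro h
      by_contra hcon
      push_neg at hcon
      have h2 := mul_pos hpos (by linarith :
        (0:ℝ) < Complex.normSq (z - ((a : ℂ) + b) / 2) - ((b - a) / 2) ^ 2)
      linarith [h1, h2]
  have habsφ : ∀ z : ℂ, z + (c : ℂ) ≠ 0 →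
      ‖mobiusPhi c z‖ = ‖z - c‖ / ‖z + c‖ := by
    intro z hz
    rw [mobiusPhi, norm_div]
  constructor
  · ext t
    simp only [Set.mem_image, Set.mem_setOf_eq]
    constructor
    · rintro ⟨z, hz, rfl⟩
      have hne' := hne z hz.le
      have h := (equiv_eq z).1 hz
      rw [habsφ z hne', h, mul_div_assoc, div_self (by
        simpa [norm_ne_zero_iff] using hne'), mul_one]
    · intro ht
      have ht1 : (1 : ℂ) - t ≠ 0 := by
        intro h0
        have : t = 1 := by linear_combination -h0
        rw [this] at ht
        simp at ht
        linarith
      refine ⟨(c : ℂ) * (1 + t) / (1 - t), ?_, ?_⟩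
      · rw [equiv_eq]
        have e1 : (c : ℂ) * (1 + t) / (1 - t) - c = 2 * c * t / (1 - t) := by
          field_simp; ring
        have e2 : (c : ℂ) * (1 + t) / (1 - t) + c = 2 * c / (1 - t) := by
          field_simp; ring
        rw [e1, e2, norm_div, norm_div]
        simp only [norm_mul, Complex.norm_real, Real.norm_eq_abs, Complex.norm_two, ht]
        rw [abs_of_pos hcpos]
        field_simp
      · have e2 : (c : ℂ) * (1 + t) / (1 - t) + c = 2 * c / (1 - t) := by
          field_simp; ring
        rw [mobiusPhi]
        have e1 : (c : ℂ) * (1 + t) / (1 - t) - c = 2 * c * t / (1 - t) := by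
          field_simp; ring
        have hc0 : (c : ℂ) ≠ 0 := by exact_mod_cast hcpos.ne'
        rw [e1, e2]
        field_simp
  · intro z hz
    simp only [Set.mem_setOf_eq] at hz ⊢
    have hne' := hne z hz
    have h := (equiv_le z).1 hz
    rw [habsφ z hne']
    rw [div_le_iff₀ (by simpa [norm_pos_iff] using hne' : 0 < ‖z + c‖)]
    linarith [h]
end

section
/- Let τ_1,…,τ_d ∈ ℂ be pairwise distinct, let w_1,…,w_d ∈ ℂ be all nonzero, and define μ_n = ∑_{j=1}^d w_j τ_j^n for integers n ≥ 0. Suppose q(t) = ∑_{m=0}^M q_m t^m is a complex polynomial such that ∑_{m=0}^M q_m μ_{n+m} = 0 for every n = 0, 1, …, d−1. Then q(τ_j) = 0 for every j = 1,…,d; i.e. every polynomial annihilating the moment sequence vanishes at all of the nodes τ_j, so the nodes are recoverable as roots of any null vector of the associated Hankel system. -/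
/-- Any polynomial `q(t) = ∑_{m=0}^M q_m t^m` annihilating the moment sequence
`μ_n = ∑_j w_j τ_j^n` (with distinct nodes and nonzero weights) for `n = 0, …, d-1`
vanishes at all the nodes `τ_j`. -/
theorem prony_null_vector_roots (d : ℕ) (τ w : Fin d → ℂ) (hτ : Function.Injective τ)
    (hw : ∀ j, w j ≠ 0) (M : ℕ) (q : ℕ → ℂ)
    (hq : ∀ n < d, ∑ m ∈ Finset.range (M + 1), q m * (∑ j, w j * τ j ^ (n + m)) = 0) :
    ∀ j, ∑ m ∈ Finset.range (M + 1), q m * τ j ^ m = 0 := by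
  intro j
  have key : (fun j => w j * ∑ m ∈ Finset.range (M + 1), q m * τ j ^ m) = 0 := by
    apply Matrix.eq_zero_of_forall_pow_sum_mul_pow_eq_zero hτ
    intro i
    have h := hq i i.2
    rw [← h]
    simp_rw [Finset.mul_sum, Finset.sum_mul]
    rw [Finset.sum_comm]
    refine Finset.sum_congr rfl fun k _ => Finset.sum_congr rfl fun m _ => ?_
    rw [pow_add]; ring
  have := congrFun key j
  simp only [Pi.zero_apply] at this
  rcases mul_eq_zero.mp this with h | h
  · exact absurd h (hw j)
  · exact h
end

section
/- Let c > 0 be real, let ξ_1,…,ξ_N ∈ ℂ with Re ξ_j ≠ 0 for all j, let r_1,…,r_N ∈ ℂ, and define g(z) = ∑_{j=1}^N r_j/(ξ_j − z). Then for every integer k, (1/(2πi)) ∮_{|t|=1} g(−c(t+1)/(t−1)) · t^{−(k+1)} dt = −(1/(2π)) ∫_{−∞}^{∞} g(iy) · ((iy − c)/(iy + c))^{−(k+1)} · (2c/(iy + c)²) dy, where the improper integral on the right converges absolutely. (This is the change of variables t = φ_c(z), z = iy, turning the unit-circle contour integral into an integral of the data of g along the imaginary axis.) -/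
open MeasureTheory

lemma exp_theta_sq (θ : ℝ) :
    Complex.exp (θ * Complex.I) =
      ((Real.cos (θ / 2) : ℂ) + (Real.sin (θ / 2) : ℂ) * Complex.I) ^ 2 := by
  have h2 : (θ : ℂ) * Complex.I = (θ / 2 : ℝ) * Complex.I + (θ / 2 : ℝ) * Complex.I := by
    push_cast; ring
  rw [h2, Complex.exp_add, Complex.exp_mul_I, sq, Complex.ofReal_cos, Complex.ofReal_sin]

lemma mobius_key (c : ℝ) (hc : (c:ℂ) ≠ 0) (C S : ℝ) (hS : (S:ℂ) ≠ 0)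
    (pyth : (C:ℂ) ^ 2 + (S:ℂ) ^ 2 = 1) :
    (-(c:ℂ) * ((((C:ℂ) + S * Complex.I) ^ 2) + 1) / ((((C:ℂ) + S * Complex.I) ^ 2) - 1)
        = Complex.I * ((c * (C / S) : ℝ) : ℂ)) ∧
    ((Complex.I * ((c * (C / S) : ℝ) : ℂ) - c) / (Complex.I * ((c * (C / S) : ℝ) : ℂ) + c)
        = ((C:ℂ) + S * Complex.I) ^ 2) ∧
    (2 * (c:ℂ) / (Complex.I * ((c * (C / S) : ℝ) : ℂ) + c) ^ 2
        = -2 * (S:ℂ) ^ 2 * (((C:ℂ) + S * Complex.I) ^ 2) / c) ∧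
    ((((C:ℂ) + S * Complex.I) ^ 2) - 1 ≠ 0) ∧
    (Complex.I * ((c * (C / S) : ℝ) : ℂ) + c ≠ 0) := by
  set Cz : ℂ := (C : ℂ)
  set Sz : ℂ := (S : ℂ)
  have hY : ((c * (C / S) : ℝ) : ℂ) = (c : ℂ) * (Cz / Sz) := by push_cast; ring
  have e1 : Cz + Sz * Complex.I ≠ 0 := by
    intro h
    have h0 : (1 : ℂ) = 0 := by
      linear_combination (Cz - Sz * Complex.I) * h - pyth + Sz ^ 2 * Complex.I_sq
    exact one_ne_zero h0
  have e2 : Cz - Sz * Complex.I ≠ 0 := by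
    intro h
    have h0 : (1 : ℂ) = 0 := by
      linear_combination (Cz + Sz * Complex.I) * h - pyth + Sz ^ 2 * Complex.I_sq
    exact one_ne_zero h0
  have hfac : (Cz + Sz * Complex.I) ^ 2 - 1 = 2 * Sz * Complex.I * (Cz + Sz * Complex.I) := by
    linear_combination pyth - Sz ^ 2 * Complex.I_sq
  have ht1 : (Cz + Sz * Complex.I) ^ 2 - 1 ≠ 0 := by
    rw [hfac]
    exact mul_ne_zero (mul_ne_zero (mul_ne_zero two_ne_zero hS) Complex.I_ne_zero) e1
  have hYc : Complex.I * ((c * (C / S) : ℝ) : ℂ) + c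
      = (c : ℂ) * Complex.I * (Cz - Sz * Complex.I) / Sz := by
    rw [hY]
    field_simp
    linear_combination Sz * Complex.I_sq
  have hYcne : Complex.I * ((c * (C / S) : ℝ) : ℂ) + c ≠ 0 := by
    rw [hYc]
    exact div_ne_zero (mul_ne_zero (mul_ne_zero hc Complex.I_ne_zero) e2) hS
  refine ⟨?_, ?_, ?_, ht1, hYcne⟩
  · rw [hY, div_eq_iff ht1, hfac]
    field_simp
    linear_combination pyth + (-2*Cz^2 - Sz^2 - 2*Cz*Sz*Complex.I) * Complex.I_sq
  · rw [div_eq_iff hYcne, hYc, hY]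
    field_simp
    linear_combination (-Complex.I*(Cz+Complex.I*Sz))*pyth + (Complex.I*(Cz+Complex.I*Sz)*Sz^2 - Sz)*Complex.I_sq
  · rw [div_eq_div_iff (pow_ne_zero 2 hYcne) hc, hYc]
    field_simp
    linear_combination (-(1 + (Cz^2 - Sz^2*Complex.I^2)))*pyth + ((Cz^2 - Sz^2*Complex.I^2)^2 + (1 + (Cz^2 - Sz^2*Complex.I^2))*Sz^2)*Complex.I_sq

/-- Change of variables `t = φ_c(z)`, `z = iy`: the unit-circle contour integral of
`g(ψ_c(t)) t^(-(k+1))`, where `g(z) = ∑_j r_j/(ξ_j - z)` has no poles on the imaginary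
axis, equals minus the integral of the data of `g` along the imaginary axis, i.e.
`(1/(2πi)) ∮_{|t|=1} g(-c(t+1)/(t-1)) t^(-(k+1)) dt
   = -(1/(2π)) ∫_ℝ g(iy) ((iy-c)/(iy+c))^(-(k+1)) (2c/(iy+c)²) dy`,
the latter integral converging absolutely. -/
theorem circleIntegral_eq_imaginary_axis_integral (c : ℝ) (hc : 0 < c) (N : ℕ)
    (ξ r : Fin N → ℂ) (hξ : ∀ j, (ξ j).re ≠ 0) (k : ℤ) :
    Integrable (fun y : ℝ =>
      (∑ j, r j / (ξ j - Complex.I * y)) *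
        ((Complex.I * y - c) / (Complex.I * y + c)) ^ (-(k + 1)) *
        (2 * c / (Complex.I * y + c) ^ 2)) ∧
    (1 / (2 * (Real.pi : ℂ) * Complex.I)) *
        (∮ t in C(0, 1),
          (∑ j, r j / (ξ j - (-c * (t + 1) / (t - 1)))) * t ^ (-(k + 1))) =
      -(1 / (2 * (Real.pi : ℂ))) *
        ∫ y : ℝ,
          (∑ j, r j / (ξ j - Complex.I * y)) *
            ((Complex.I * y - c) / (Complex.I * y + c)) ^ (-(k + 1)) *
            (2 * c / (Complex.I * y + c) ^ 2) := by
  classical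
  have hπ := Real.pi_pos
  have hcne : (c : ℂ) ≠ 0 := by exact_mod_cast hc.ne'
  set S : Set ℝ := Set.Ioo 0 (2 * Real.pi) with hSdef
  have hmS : MeasurableSet S := measurableSet_Ioo
  set f : ℝ → ℝ := fun θ => c * (Real.cos (θ / 2) / Real.sin (θ / 2)) with hfdef
  set f' : ℝ → ℝ := fun θ => -c / (2 * Real.sin (θ / 2) ^ 2) with hf'def
  set h : ℝ → ℂ := fun y =>
      (∑ j, r j / (ξ j - Complex.I * y)) *
        ((Complex.I * y - c) / (Complex.I * y + c)) ^ (-(k + 1)) *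
        (2 * c / (Complex.I * y + c) ^ 2) with hhdef
  set G : ℝ → ℂ := fun θ =>
      Complex.exp (θ * Complex.I) *
        ((∑ j, r j / (ξ j -
            (-(c : ℂ) * (Complex.exp (θ * Complex.I) + 1) /
              (Complex.exp (θ * Complex.I) - 1)))) *
          Complex.exp (θ * Complex.I) ^ (-(k + 1))) with hGdef
  -- basic trigonometric facts on S
  have hsinpos : ∀ θ ∈ S, 0 < Real.sin (θ / 2) := by
    intro θ hθ
    exact Real.sin_pos_of_pos_of_lt_pi (by linarith [hθ.1]) (by linarith [hθ.2])
  have pyth : ∀ θ : ℝ, ((Real.cos (θ / 2) : ℝ) : ℂ) ^ 2 + ((Real.sin (θ / 2) : ℝ) : ℂ) ^ 2 = 1 := by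
    intro θ
    norm_cast
    exact Real.cos_sq_add_sin_sq _
  -- key pointwise identity
  have hkey : ∀ θ ∈ S, |f' θ| • h (f θ) = -G θ := by
    intro θ hθ
    have hsθ := hsinpos θ hθ
    have hSne : ((Real.sin (θ / 2) : ℝ) : ℂ) ≠ 0 := by exact_mod_cast hsθ.ne'
    obtain ⟨hA, hB, hC, ht1, hYcne⟩ := mobius_key c hcne _ _ hSne (pyth θ)
    have habs : |f' θ| = c / (2 * Real.sin (θ / 2) ^ 2) := by
      rw [hf'def, abs_div, abs_neg, abs_of_pos hc, abs_of_pos (by positivity)]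
    simp only [hhdef, hGdef, hfdef]
    rw [exp_theta_sq θ, hA, hB, hC, habs, Complex.real_smul]
    have hcast : ((c / (2 * Real.sin (θ / 2) ^ 2) : ℝ) : ℂ)
        = (c : ℂ) / (2 * ((Real.sin (θ / 2) : ℝ) : ℂ) ^ 2) := by push_cast; ring
    rw [hcast]
    set E : ℂ := (((Real.cos (θ / 2) : ℝ) : ℂ) + ((Real.sin (θ / 2) : ℝ) : ℂ) * Complex.I) ^ 2
    set T : ℂ := E ^ (-(k + 1))
    set Sg : ℂ := ∑ j, r j / (ξ j - Complex.I * ((c * (Real.cos (θ / 2) / Real.sin (θ / 2)) : ℝ) : ℂ))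
    have key : ∀ a b x y z : ℂ, a ≠ 0 → b ≠ 0 →
        a / (2 * b ^ 2) * (x * y * (-2 * b ^ 2 * z / a)) = -(z * (x * y)) := by
      intro a b x y z ha hb
      field_simp
    exact key _ _ _ _ _ hcne hSne
  -- derivative of f on S
  have hderiv : ∀ θ ∈ S, HasDerivWithinAt f (f' θ) S θ := by
    intro θ hθ
    have hsθ := hsinpos θ hθ
    have h1 : HasDerivAt (fun x : ℝ => x / 2) (1 / 2) θ := by
      simpa using (hasDerivAt_id θ).div_const 2
    have hcos : HasDerivAt (fun x : ℝ => Real.cos (x / 2)) (-Real.sin (θ / 2) * (1 / 2)) θ :=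
      (Real.hasDerivAt_cos (θ / 2)).comp (h₂ := Real.cos) θ h1
    have hsin : HasDerivAt (fun x : ℝ => Real.sin (x / 2)) (Real.cos (θ / 2) * (1 / 2)) θ :=
      (Real.hasDerivAt_sin (θ / 2)).comp (h₂ := Real.sin) θ h1
    have hdiv := (hcos.div hsin hsθ.ne').const_mul c
    have hval : c * ((-Real.sin (θ / 2) * (1 / 2) * Real.sin (θ / 2)
        - Real.cos (θ / 2) * (Real.cos (θ / 2) * (1 / 2))) / Real.sin (θ / 2) ^ 2) = f' θ := by
      rw [hf'def]
      have py := Real.sin_sq_add_cos_sq (θ / 2)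
      field_simp
      linear_combination (-1) * py
    rw [hval] at hdiv
    exact hdiv.hasDerivWithinAt
  -- f written via tan
  have hft : ∀ θ : ℝ, f θ = c * Real.tan (Real.pi / 2 - θ / 2) := by
    intro θ
    rw [hfdef, Real.tan_pi_div_two_sub, Real.tan_eq_sin_div_cos, inv_div]
  have hmem : ∀ θ ∈ S, Real.pi / 2 - θ / 2 ∈ Set.Ioo (-(Real.pi / 2)) (Real.pi / 2) := by
    intro θ hθ
    exact ⟨by linarith [hθ.2], by linarith [hθ.1]⟩
  have hinj : Set.InjOn f S := by
    intro a ha b hb hab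
    rw [hft a, hft b] at hab
    have h2 := Real.injOn_tan (hmem a ha) (hmem b hb) (mul_left_cancel₀ hc.ne' hab)
    linarith
  have himg : f '' S = Set.univ := by
    rw [Set.eq_univ_iff_forall]
    intro y
    refine ⟨Real.pi - 2 * Real.arctan (y / c), ?_, ?_⟩
    · obtain ⟨h1, h2⟩ := Real.arctan_mem_Ioo (y / c)
      exact ⟨by linarith, by linarith⟩
    · rw [hft]
      have harg : Real.pi / 2 - (Real.pi - 2 * Real.arctan (y / c)) / 2 = Real.arctan (y / c) := by
        ring
      rw [harg, Real.tan_arctan]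
      field_simp
  -- boundedness and continuity of G on S
  have hGbound : ∀ θ ∈ S, ‖G θ‖ ≤ ∑ j, ‖r j‖ / |(ξ j).re| := by
    intro θ hθ
    have hsθ := hsinpos θ hθ
    have hSne : ((Real.sin (θ / 2) : ℝ) : ℂ) ≠ 0 := by exact_mod_cast hsθ.ne'
    obtain ⟨hA, -, -, -, -⟩ := mobius_key c hcne _ _ hSne (pyth θ)
    have e1 : ‖Complex.exp ((θ : ℂ) * Complex.I)‖ = 1 := by
      exact Complex.norm_exp_ofReal_mul_I θ
    have e2 : ‖Complex.exp ((θ : ℂ) * Complex.I) ^ (-(k + 1))‖ = 1 := by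
      rw [norm_zpow, e1, one_zpow]
    rw [hGdef]
    simp only [norm_mul, e1, e2, one_mul, mul_one]
    have hsum : (∑ j, r j / (ξ j -
        (-(c : ℂ) * (Complex.exp ((θ:ℝ) * Complex.I) + 1) /
          (Complex.exp ((θ:ℝ) * Complex.I) - 1))))
        = ∑ j, r j / (ξ j - Complex.I * ((c * (Real.cos (θ / 2) / Real.sin (θ / 2)) : ℝ) : ℂ)) := by
      simp only [exp_theta_sq θ, hA]
    rw [hsum]
    refine (norm_sum_le _ _).trans (Finset.sum_le_sum fun j _ => ?_)
    rw [norm_div]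
    have hre : (ξ j - Complex.I * ((c * (Real.cos (θ / 2) / Real.sin (θ / 2)) : ℝ) : ℂ)).re
        = (ξ j).re := by
      set q : ℝ := c * (Real.cos (θ / 2) / Real.sin (θ / 2)) with hq
      simp [Complex.sub_re, Complex.mul_re]
    have hge : |(ξ j).re| ≤ ‖ξ j - Complex.I * ((c * (Real.cos (θ / 2) / Real.sin (θ / 2)) : ℝ) : ℂ)‖ := by
      rw [← hre]
      exact Complex.abs_re_le_norm _
    exact div_le_div_of_nonneg_left (norm_nonneg _) (abs_pos.2 (hξ j)) hge
  -- continuity of G on S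
  have hexpC : Continuous fun θ : ℝ => Complex.exp ((θ : ℂ) * Complex.I) :=
    (Complex.continuous_ofReal.mul continuous_const).cexp
  have ht1ne : ∀ θ ∈ S, Complex.exp ((θ : ℂ) * Complex.I) - 1 ≠ 0 := by
    intro θ hθ
    have hsθ := hsinpos θ hθ
    have hSne : ((Real.sin (θ / 2) : ℝ) : ℂ) ≠ 0 := by exact_mod_cast hsθ.ne'
    obtain ⟨-, -, -, ht1, -⟩ := mobius_key c hcne _ _ hSne (pyth θ)
    rw [exp_theta_sq θ]
    exact ht1
  have hdenne : ∀ θ ∈ S, ∀ j : Fin N,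
      ξ j - (-(c : ℂ) * (Complex.exp ((θ : ℂ) * Complex.I) + 1) /
        (Complex.exp ((θ : ℂ) * Complex.I) - 1)) ≠ 0 := by
    intro θ hθ j
    have hsθ := hsinpos θ hθ
    have hSne : ((Real.sin (θ / 2) : ℝ) : ℂ) ≠ 0 := by exact_mod_cast hsθ.ne'
    obtain ⟨hA, -, -, -, -⟩ := mobius_key c hcne _ _ hSne (pyth θ)
    rw [exp_theta_sq θ, hA]
    intro h0
    apply hξ j
    have h1 := congrArg Complex.re h0
    set q : ℝ := c * (Real.cos (θ / 2) / Real.sin (θ / 2)) with hq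
    simpa [Complex.sub_re, Complex.mul_re] using h1
  have hGcont : ContinuousOn G S := by
    rw [hGdef]
    apply ContinuousOn.mul hexpC.continuousOn
    apply ContinuousOn.mul
    · apply continuousOn_finset_sum
      intro j _
      apply ContinuousOn.div continuousOn_const
      · exact continuousOn_const.sub
          ((continuousOn_const.mul (hexpC.continuousOn.add continuousOn_const)).div
            (hexpC.continuousOn.sub continuousOn_const) ht1ne)
      · exact fun θ hθ => hdenne θ hθ j
    · intro θ hθ
      exact (hexpC.continuousAt.zpow₀ _ (Or.inl (Complex.exp_ne_zero _))).continuousWithinAt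
  have hGint : IntegrableOn G S := by
    have hconst : IntegrableOn (fun _ : ℝ => ∑ j, ‖r j‖ / |(ξ j).re|) S := by
      apply (integrableOn_const_iff enorm_ne_top).mpr
      right
      exact measure_Ioo_lt_top
    exact Integrable.mono' hconst (hGcont.aestronglyMeasurable hmS)
      ((ae_restrict_iff' hmS).mpr (Filter.Eventually.of_forall hGbound))
  have hint1 : Integrable h := by
    rw [← integrableOn_univ, ← himg,
      integrableOn_image_iff_integrableOn_abs_deriv_smul hmS hderiv hinj]
    exact IntegrableOn.congr_fun hGint.neg (fun θ hθ => (hkey θ hθ).symm) hmS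
  have hchg : (∫ y : ℝ, h y) = ∫ θ in S, -G θ := by
    rw [← setIntegral_univ, ← himg,
      integral_image_eq_integral_abs_deriv_smul hmS hderiv hinj]
    exact setIntegral_congr_fun hmS hkey
  have h2π : (0 : ℝ) ≤ 2 * Real.pi := by linarith
  have hcirc : (∮ t in C(0, 1),
      (∑ j, r j / (ξ j - (-(c : ℂ) * (t + 1) / (t - 1)))) * t ^ (-(k + 1)))
      = Complex.I * ∫ θ in S, G θ := by
    have hpt : ∀ θ : ℝ, deriv (circleMap 0 1) θ •
        ((∑ j, r j / (ξ j - (-(c : ℂ) * (circleMap 0 1 θ + 1) / (circleMap 0 1 θ - 1)))) *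
          circleMap 0 1 θ ^ (-(k + 1))) = Complex.I * G θ := by
      intro θ
      simp only [deriv_circleMap, circleMap, Complex.ofReal_one, Complex.ofReal_zero, zero_add,
        one_mul, hGdef, smul_eq_mul]
      ring
    unfold circleIntegral
    simp only [hpt]
    rw [intervalIntegral.integral_const_mul, intervalIntegral.integral_of_le h2π,
      integral_Ioc_eq_integral_Ioo, hSdef]
  refine ⟨hint1, ?_⟩
  rw [hcirc, hchg, integral_neg]
  have hπC : ((Real.pi : ℝ) : ℂ) ≠ 0 := by exact_mod_cast Real.pi_ne_zero
  set J := ∫ θ in S, G θ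
  field_simp
end

section
/- Let c > 0 be real, let ξ_1,…,ξ_N be nonzero real numbers with ξ_j ≠ −c for all j, let r_1,…,r_N be real numbers, and define g(z) = ∑_{j=1}^N r_j/(ξ_j − z). Then for every nonzero integer k, the Fourier coefficient ĝ_k := (1/(2πi)) ∮_{|t|=1} g(−c(t+1)/(t−1)) · t^{−(k+1)} dt is a real number. -/
open Complex MeasureTheory intervalIntegral

private lemma my_interval_integral_conj (f : ℝ → ℂ) (a b : ℝ) :
    (∫ x in a..b, (starRingEnd ℂ) (f x)) = (starRingEnd ℂ) (∫ x in a..b, f x) := by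
  simp only [intervalIntegral, integral_conj, map_sub]

private lemma circleIntegral_conj_neg (f : ℂ → ℂ)
    (hf : ∀ t : ℂ, f ((starRingEnd ℂ) t) = (starRingEnd ℂ) (f t)) :
    (starRingEnd ℂ) (∮ t in C(0, 1), f t) = -(∮ t in C(0, 1), f t) := by
  have key : ∀ θ : ℝ,
      (starRingEnd ℂ) (deriv (circleMap 0 1) (2 * Real.pi - θ) •
          f (circleMap 0 1 (2 * Real.pi - θ)))
        = -(deriv (circleMap 0 1) θ • f (circleMap 0 1 θ)) := by
    intro θ
    have hper : circleMap 0 1 (2 * Real.pi - θ) = circleMap 0 1 (-θ) := by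
      rw [show 2 * Real.pi - θ = -θ + 2 * Real.pi by ring]
      exact periodic_circleMap 0 1 (-θ)
    have hcm : circleMap 0 1 (-θ) = (starRingEnd ℂ) (circleMap 0 1 θ) := by
      simp only [circleMap, zero_add, one_mul, ← Complex.exp_conj, map_mul,
        Complex.conj_ofReal, Complex.conj_I, Complex.ofReal_neg]
      ring_nf
    rw [deriv_circleMap, deriv_circleMap, hper, hcm, hf]
    simp only [smul_eq_mul, map_mul, Complex.conj_conj, Complex.conj_I, map_mul]
    ring
  rw [circleIntegral, ← my_interval_integral_conj]
  have hsub := intervalIntegral.integral_comp_sub_left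
    (a := (0:ℝ)) (b := 2 * Real.pi)
    (fun θ : ℝ => (starRingEnd ℂ) (deriv (circleMap 0 1) θ • f (circleMap 0 1 θ)))
    (2 * Real.pi)
  simp only [sub_self, sub_zero] at hsub
  rw [← hsub]
  simp only [key]
  rw [intervalIntegral.integral_neg]

/-- When the poles `ξ_j` are nonzero reals (with `ξ_j ≠ -c`) and the residues `r_j`
are real, the Fourier coefficients
`ĝ_k = (1/(2πi)) ∮_{|t|=1} g(-c(t+1)/(t-1)) t^(-(k+1)) dt`, `k ≠ 0`, of the
transformed function are real numbers. -/
theorem fourier_coeff_real_of_real_poles (c : ℝ) (hc : 0 < c) (N : ℕ) (ξ r : Fin N → ℝ)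
    (hξ0 : ∀ j, ξ j ≠ 0) (hξc : ∀ j, ξ j ≠ -c) (k : ℤ) (hk : k ≠ 0) :
    ((1 / (2 * (Real.pi : ℂ) * Complex.I)) *
        (∮ t in C(0, 1),
          (∑ j, (r j : ℂ) / ((ξ j : ℂ) - (-c * (t + 1) / (t - 1)))) * t ^ (-(k + 1)))).im
      = 0 := by
  set f : ℂ → ℂ := fun t =>
    (∑ j, (r j : ℂ) / ((ξ j : ℂ) - (-c * (t + 1) / (t - 1)))) * t ^ (-(k + 1)) with hfdef
  have hconj : ∀ t : ℂ, f ((starRingEnd ℂ) t) = (starRingEnd ℂ) (f t) := by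
    intro t
    simp only [hfdef, map_mul, map_sum, map_div₀, map_sub, map_add, map_neg, map_one,
      map_zpow₀, Complex.conj_ofReal]
  have hI := circleIntegral_conj_neg f hconj
  set z := ∮ t in C(0, 1), f t with hz
  have hre : z.re = 0 := by
    have := congrArg Complex.re hI
    simp only [Complex.conj_re, Complex.neg_re] at this
    linarith
  have : (1 / (2 * (Real.pi : ℂ) * Complex.I)) * z = z / (2 * (Real.pi : ℂ) * Complex.I) := by
    ring
  rw [this, Complex.div_im]
  simp [hre, Complex.ofReal_re, Complex.ofReal_im]
end

section
/- Let c > 0 be real, let ξ_1,…,ξ_N ∈ ℂ with Re ξ_j ≠ 0 for all j, let r_1,…,r_N ∈ ℂ, and define g(z) = ∑_{j=1}^N r_j/(ξ_j − z). Set τ_j = (ξ_j − c)/(ξ_j + c) and w_j = 2c·r_j/(ξ_j + c)². Then for every integer k ≤ −1, the Fourier coefficient ĝ_k := (1/(2πi)) ∮_{|t|=1} g(−c(t+1)/(t−1)) · t^{−(k+1)} dt equals −∑_{j : Re ξ_j > 0} w_j τ_j^{−(k+1)}; i.e. the negatively indexed Fourier coefficients of the transformed function are exactly signed power sums of the images under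 φ_c of the poles of g lying in the right half-plane. -/
open Complex Metric Set

lemma circleIntegral_finset_sum' {ι : Type*} (s : Finset ι) (f : ι → ℂ → ℂ) (c : ℂ) (R : ℝ)
    (h : ∀ i ∈ s, CircleIntegrable (f i) c R) :
    (∮ z in C(c, R), ∑ i ∈ s, f i z) = ∑ i ∈ s, ∮ z in C(c, R), f i z := by
  simp only [circleIntegral, Finset.smul_sum]
  exact intervalIntegral.integral_finset_sum fun i hi => (h i hi).out

/-- For `g(z) = ∑_j r_j/(ξ_j - z)` with poles off the imaginary axis, setting
`τ_j = (ξ_j - c)/(ξ_j + c)` and `w_j = 2c r_j/(ξ_j + c)²`, the negatively indexed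
Fourier coefficients `ĝ_k = (1/(2πi)) ∮_{|t|=1} g(-c(t+1)/(t-1)) t^(-(k+1)) dt`,
`k ≤ -1`, are the signed power sums `-∑_{j : Re ξ_j > 0} w_j τ_j^(-(k+1))` of the
images under `φ_c` of the poles of `g` in the right half-plane. -/
theorem fourier_coeff_neg_index_power_sum (c : ℝ) (hc : 0 < c) (N : ℕ)
    (ξ r : Fin N → ℂ) (hξ : ∀ j, (ξ j).re ≠ 0) (k : ℤ) (hk : k ≤ -1) :
    (1 / (2 * (Real.pi : ℂ) * Complex.I)) *
        (∮ t in C(0, 1),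
          (∑ j, r j / (ξ j - (-c * (t + 1) / (t - 1)))) * t ^ (-(k + 1))) =
      -∑ j ∈ Finset.univ.filter (fun j => 0 < (ξ j).re),
          (2 * c * r j / (ξ j + c) ^ 2) * ((ξ j - c) / (ξ j + c)) ^ (-(k + 1)) := by
  obtain ⟨n, hn⟩ : ∃ n : ℕ, -(k + 1) = (n : ℤ) :=
    ⟨(-(k + 1)).toNat, (Int.toNat_of_nonneg (by omega)).symm⟩
  simp only [hn, zpow_natCast]
  have hc0 : (c : ℂ) ≠ 0 := by
    simpa using (Complex.ofReal_ne_zero.2 hc.ne')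
  set τ : Fin N → ℂ := fun j => (ξ j - c) / (ξ j + c) with hτdef
  set D : Fin N → ℂ → ℂ := fun j t => (ξ j + c) * t + (c - ξ j) with hDdef
  set h : Fin N → ℂ → ℂ := fun j t => r j * (t - 1) / D j t * t ^ n with hhdef
  -- basic norm comparison
  have hsq : ∀ j, Complex.normSq (ξ j + c) - Complex.normSq (ξ j - c) = 4 * c * (ξ j).re := by
    intro j
    simp [Complex.normSq_apply, Complex.add_re, Complex.add_im, Complex.sub_re, Complex.sub_im]
    ring
  have hpos : ∀ j, 0 < (ξ j).re → ξ j + c ≠ 0 ∧ ‖τ j‖ < 1 := by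
    intro j hj
    have hne : ξ j + (c : ℂ) ≠ 0 := by
      intro H
      have := congrArg Complex.re H
      simp [Complex.add_re] at this
      nlinarith
    refine ⟨hne, ?_⟩
    have h1 : ‖ξ j - c‖ < ‖ξ j + c‖ := by
      have e1 := Complex.sq_norm (ξ j + c)
      have e2 := Complex.sq_norm (ξ j - c)
      have := hsq j
      nlinarith [norm_nonneg (ξ j - c), norm_nonneg (ξ j + c)]
    rw [hτdef, norm_div, div_lt_one (norm_pos_iff.2 hne)]
    exact h1
  have hneg : ∀ j, (ξ j).re < 0 → ξ j + (c : ℂ) ≠ 0 → 1 < ‖τ j‖ := by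
    intro j hj hne
    have h1 : ‖ξ j + c‖ < ‖ξ j - c‖ := by
      have e1 := Complex.sq_norm (ξ j + c)
      have e2 := Complex.sq_norm (ξ j - c)
      have := hsq j
      nlinarith [norm_nonneg (ξ j - c), norm_nonneg (ξ j + c)]
    rw [hτdef, norm_div, lt_div_iff₀ (norm_pos_iff.2 hne), one_mul]
    exact h1
  have hfac : ∀ j, ξ j + (c : ℂ) ≠ 0 → ∀ t, D j t = (ξ j + c) * (t - τ j) := by
    intro j hne t
    rw [hDdef, hτdef]
    field_simp
    ring
  -- denominator nonzero on the closed ball for non-right-half-plane poles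
  have hDball : ∀ j, ¬ 0 < (ξ j).re → ∀ t ∈ closedBall (0 : ℂ) 1, D j t ≠ 0 := by
    intro j hj t ht
    have hre : (ξ j).re < 0 := lt_of_le_of_ne (not_lt.1 hj) (hξ j)
    by_cases hne : ξ j + (c : ℂ) = 0
    · have hxi : ξ j = -c := by linear_combination hne
      rw [hDdef]
      simp only [hne, hxi]
      simpa using (by
        intro H
        have : (c : ℂ) = 0 := by linear_combination H / 2
        exact hc0 this : ¬((c : ℂ) - -(c : ℂ) = 0))
    · rw [hfac j hne t]
      refine mul_ne_zero hne (sub_ne_zero.2 ?_)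
      intro H
      have htle : ‖t‖ ≤ 1 := by
        simpa [Complex.dist_eq] using mem_closedBall.1 ht
      have := hneg j hre hne
      rw [← H] at this
      linarith
  -- denominator nonzero on the sphere for every pole
  have hDsphere : ∀ j, ∀ t : ℂ, ‖t‖ = 1 → D j t ≠ 0 := by
    intro j t ht
    by_cases hj : 0 < (ξ j).re
    · obtain ⟨hne, habs⟩ := hpos j hj
      rw [hfac j hne t]
      refine mul_ne_zero hne (sub_ne_zero.2 ?_)
      intro H
      rw [← H] at habs
      linarith [habs, ht.ge]
    · exact hDball j hj t (by simpa [Complex.dist_eq, mem_closedBall] using ht.le)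
  -- integrability of each h j
  have hint : ∀ j, CircleIntegrable (h j) 0 1 := by
    intro j
    refine ContinuousOn.circleIntegrable zero_le_one ?_
    refine ContinuousOn.mul (ContinuousOn.div ?_ ?_ ?_) (continuous_pow n).continuousOn
    · exact (continuous_const.mul (continuous_id.sub continuous_const)).continuousOn
    · exact ((continuous_const.mul continuous_id).add continuous_const).continuousOn
    · intro t ht
      exact hDsphere j t (by simpa [Complex.dist_eq] using ht)
  -- Step 1: replace integrand a.e.
  have step1 : (∮ t in C((0 : ℂ), 1),
      (∑ j, r j / (ξ j - (-c * (t + 1) / (t - 1)))) * t ^ n)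
      = ∮ t in C((0 : ℂ), 1), ∑ j, h j t := by
    have hcnt : (circleMap 0 1 ⁻¹' {1}).Countable :=
      (Set.countable_singleton _).preimage_circleMap 0 one_ne_zero
    refine intervalIntegral.integral_congr_ae ((hcnt.ae_notMem _).mono fun θ hθ _ => ?_)
    change circleMap 0 1 θ ≠ 1 at hθ
    set t := circleMap 0 1 θ with htdef
    have habs : ‖t‖ = 1 := by rw [htdef]; simp
    have ht1 : t - 1 ≠ 0 := sub_ne_zero.2 hθ
    congr 1
    dsimp only
    rw [Finset.sum_mul]
    refine Finset.sum_congr rfl fun j _ => ?_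
    have hDt : D j t ≠ 0 := hDsphere j t habs
    have hψ : ξ j - (-(c : ℂ) * (t + 1) / (t - 1)) = D j t / (t - 1) := by
      rw [hDdef]
      field_simp
      ring
    rw [hψ, div_div_eq_mul_div, hhdef]
  -- Step 3: value of each integral
  have step3 : ∀ j, (∮ t in C((0 : ℂ), 1), h j t)
      = if 0 < (ξ j).re then
          -((2 * (Real.pi : ℂ) * Complex.I) * ((2 * c * r j / (ξ j + c) ^ 2) * τ j ^ n))
        else 0 := by
    intro j
    by_cases hj : 0 < (ξ j).re
    · rw [if_pos hj]
      obtain ⟨hne, habs⟩ := hpos j hj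
      have hτmem : τ j ∈ ball (0 : ℂ) 1 := by
        simpa [Complex.dist_eq] using habs
      have hcong : (∮ t in C((0 : ℂ), 1), h j t)
          = ∮ t in C((0 : ℂ), 1),
              (t - τ j)⁻¹ • ((r j / (ξ j + c)) * ((t - 1) * t ^ n)) := by
        refine circleIntegral.integral_congr zero_le_one fun t ht => ?_
        have htabs : ‖t‖ = 1 := by simpa [Complex.dist_eq] using ht
        have htτ : t - τ j ≠ 0 := by
          refine sub_ne_zero.2 fun H => ?_
          rw [← H] at habs; linarith [habs, htabs.ge]
        rw [hhdef, smul_eq_mul]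
        simp only [hfac j hne t]
        field_simp
      rw [hcong]
      have hdiff : DiffContOnCl ℂ (fun t : ℂ => (r j / (ξ j + c)) * ((t - 1) * t ^ n))
          (ball (0 : ℂ) 1) := by
        apply Differentiable.diffContOnCl
        exact differentiable_const _ |>.mul ((differentiable_id.sub_const 1).mul
          (differentiable_pow n))
      rw [hdiff.circleIntegral_sub_inv_smul hτmem]
      have hτ1 : τ j - 1 = -(2 * c) / (ξ j + c) := by
        rw [hτdef]; field_simp; ring
      rw [smul_eq_mul, hτ1]
      field_simp
    · rw [if_neg hj]
      refine Complex.circleIntegral_eq_zero_of_differentiable_on_off_countable zero_le_one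
        Set.countable_empty ?_ ?_
      · refine ContinuousOn.mul (ContinuousOn.div ?_ ?_ (hDball j hj)) (continuous_pow n).continuousOn
        · exact (continuous_const.mul (continuous_id.sub continuous_const)).continuousOn
        · exact ((continuous_const.mul continuous_id).add continuous_const).continuousOn
      · intro z hz
        have hz' : z ∈ closedBall (0 : ℂ) 1 := ball_subset_closedBall hz.1
        refine DifferentiableAt.mul (DifferentiableAt.div ?_ ?_ (hDball j hj z hz'))
          (differentiable_pow n _)
        · exact (differentiableAt_const _).mul (differentiable_id.differentiableAt.sub_const 1)
        · exact ((differentiableAt_const _).mul differentiable_id.differentiableAt).add_const _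
  -- assemble
  rw [step1, circleIntegral_finset_sum' _ _ _ _ (fun j _ => hint j),
    Finset.sum_congr rfl (fun j _ => step3 j), ← Finset.sum_filter]
  have hπ : (2 * (Real.pi : ℂ) * Complex.I) ≠ 0 := by
    simp [Real.pi_ne_zero, Complex.I_ne_zero, Complex.ofReal_ne_zero]
  have hterm : ∀ j : Fin N,
      -((2 * (Real.pi : ℂ) * Complex.I) * ((2 * c * r j / (ξ j + c) ^ 2) * τ j ^ n))
        = (2 * (Real.pi : ℂ) * Complex.I) *
            (-((2 * c * r j / (ξ j + c) ^ 2) * ((ξ j - c) / (ξ j + c)) ^ n)) := by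
    intro j
    simp only [hτdef]
    ring
  rw [Finset.sum_congr rfl (fun j _ => hterm j), ← Finset.mul_sum, ← mul_assoc, one_div,
    inv_mul_cancel₀ hπ, one_mul]
  simp
end
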